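/- Let B be a totally definite quaternion algebra over a totally real field F, R an order in B, and for x, y in the finite idele group of B^× let Γ_{x,y} = (B^× ∩ x⁻¹ R̂^× y)/O_F^× and Γ'_{x,y} = (B^× ∩ x⁻¹ F̂^× R̂^× y)/F^×. Then the natural map Γ_{x,y} → Γ'_{x,y} is injective, and Γ'_{x,y} decomposes as the disjoint union over ξ ∈ cl(F) of Γ_{ξx,y}. -/

import Mathlib

open scoped Classical

/- Abstract adelic framework: `G` plays the role of `B̂^×`, `Bx` the image of `B^×`,
`U` the compact open subgroup `R̂^×`, `Fh` the central subgroup `F̂^×`.  Then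
`F^× = Bx ⊓ Fh`, `O_F^× = Bx ⊓ U` and `Ô_F^× = Fh ⊓ U`. -/

variable {G : Type*} [Group G]

/-- The set `Γ_{x,y} = B^× ∩ x⁻¹ R̂^× y` (before dividing by `O_F^×`). -/
def gammaSet (Bx U : Subgroup G) (x y : G) : Set G :=
  {γ | γ ∈ Bx ∧ ∃ u ∈ U, γ = x⁻¹ * u * y}

/-- The set `Γ'_{x,y} = B^× ∩ x⁻¹ F̂^× R̂^× y` (before dividing by `F^×`). -/
def gamma'Set (Bx Fh U : Subgroup G) (x y : G) : Set G :=
  {γ | γ ∈ Bx ∧ ∃ f ∈ Fh, ∃ u ∈ U, γ = x⁻¹ * f * u * y}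

/-- The left `OF`-orbit of `γ`. -/
def leftOrbit (OF : Subgroup G) (γ : G) : Set G := {δ | ∃ ε ∈ OF, δ = ε * γ}

/-- `Γ_{x,y}` as a set of `O_F^×`-orbits, i.e. `(B^× ∩ x⁻¹R̂^×y)/O_F^×`. -/
def Gamma (Bx U OF : Subgroup G) (x y : G) : Set (Set G) :=
  {s | ∃ γ ∈ gammaSet Bx U x y, s = leftOrbit OF γ}

/-- The common value of `v·γ` on an orbit `s` (via a choice of representative). -/
noncomputable def orbitVal {V : Type*} [AddCommMonoid V]
    (act : V → G → V) (v : V) (s : Set G) : V :=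
  if h : s.Nonempty then act v h.some else 0

/-- The quaternionic modular form `φ_{x,v}`, with `φ_{x,v}(y) = Σ_{γ ∈ Γ_{x,y}} v·γ`. -/
noncomputable def phiForm {V : Type*} [AddCommMonoid V]
    (Bx U OF : Subgroup G) (act : V → G → V) (x : G) (v : V) (y : G) : V :=
  ∑ᶠ s ∈ Gamma Bx U OF x y, orbitVal act v s

/-- The double coset `R̂^× x B^×`. -/
def doubleCoset (U Bx : Subgroup G) (x : G) : Set G :=
  {g | ∃ u ∈ U, ∃ b ∈ Bx, g = u * x * b}

/-- The class set `cl(R) = R̂^×\B̂^×/B^×`, realized as the set of double cosets. -/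
def classSet (U Bx : Subgroup G) : Set (Set G) :=
  {s | ∃ x : G, s = doubleCoset U Bx x}

/-- The weight `w_x = |Γ_x| = |Γ_{x,x}|`. -/
noncomputable def weight (Bx U OF : Subgroup G) (x : G) : ℕ :=
  Nat.card (Gamma Bx U OF x x)

/-- The height pairing `⟨φ,ψ⟩ = Σ_{x ∈ cl(R)} (1/w_x)⟨φ(x),ψ(x)⟩`. -/
noncomputable def heightPairing {V : Type*} [NormedAddCommGroup V] [InnerProductSpace ℂ V]
    (Bx U OF : Subgroup G) (φ ψ : G → V) : ℂ :=
  ∑ᶠ s ∈ classSet U Bx,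
    if h : s.Nonempty then
      (weight Bx U OF h.some : ℂ)⁻¹ * (inner ℂ (φ h.some) (ψ h.some) : ℂ)
    else 0

/-- The natural map `Γ_{x,y} → Γ'_{x,y}` is injective, and
`Γ'_{x,y} = ⨿_{ξ ∈ cl(F)} Γ_{ξx,y}`.  Here `F^× = Bx ⊓ Fh`, `O_F^× = Bx ⊓ U` and
`Ô_F^× = Fh ⊓ U`, and the class group `cl(F) = F̂^×/(Ô_F^× F^×)` is encoded by the
disjointness condition in the third conjunct.  The first conjunct is injectivity at
the level of quotients: two elements of `Γ_{x,y}` that are `F^×`-equivalent are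
already `O_F^×`-equivalent; the second is the covering `Γ'_{x,y} = ⋃_ξ Γ_{ξx,y}`;
the third says two translates `Γ_{ξx,y}`, `Γ_{ζx,y}` meet modulo `F^×` only if
`ξ, ζ` agree in `cl(F)`. -/
theorem gamma'_decomposition
    (Bx Fh U : Subgroup G)
    (hcent : ∀ f ∈ Fh, ∀ g : G, f * g = g * f)
    (x y : G) :
    (∀ γ ∈ gammaSet Bx U x y, ∀ δ ∈ gammaSet Bx U x y,
      (∃ f ∈ Bx ⊓ Fh, γ = f * δ) → ∃ ε ∈ Bx ⊓ U, γ = ε * δ) ∧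
    (gamma'Set Bx Fh U x y = ⋃ ξ ∈ (Fh : Set G), gammaSet Bx U (ξ * x) y) ∧
    (∀ ξ ∈ Fh, ∀ ζ ∈ Fh, ∀ γ ∈ gammaSet Bx U (ξ * x) y, ∀ f ∈ Bx ⊓ Fh,
      f * γ ∈ gammaSet Bx U (ζ * x) y →
      ∃ e ∈ Fh ⊓ U, ∃ h ∈ Bx ⊓ Fh, ζ = ξ * e * h) := by
  refine ⟨?_, ?_, ?_⟩
  · rintro γ ⟨hγB, u, hu, rfl⟩ δ ⟨hδB, u', hu', rfl⟩ ⟨f, ⟨hfB, hfF⟩, hfd⟩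
    refine ⟨f, ⟨hfB, ?_⟩, hfd⟩
    have h2 : x⁻¹ * u * y = x⁻¹ * (f * u') * y := by
      rw [hfd, ← mul_assoc, ← mul_assoc, hcent f hfF x⁻¹, mul_assoc x⁻¹ f u']
    have h3 : u = f * u' := mul_left_cancel (mul_right_cancel h2)
    have h4 : f = u * u'⁻¹ := by rw [h3]; group
    rw [h4]; exact U.mul_mem hu (U.inv_mem hu')
  · ext γ
    simp only [gamma'Set, gammaSet, Set.mem_setOf_eq, Set.mem_iUnion, SetLike.mem_coe,
      exists_prop]
    constructor
    · rintro ⟨hB, f, hf, u, hu, rfl⟩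
      exact ⟨f⁻¹, Fh.inv_mem hf, hB, u, hu, by group⟩
    · rintro ⟨ξ, hξ, hB, u, hu, rfl⟩
      exact ⟨hB, ξ⁻¹, Fh.inv_mem hξ, u, hu, by group⟩
  · rintro ξ hξ ζ hζ γ ⟨hγB, u, hu, rfl⟩ f ⟨hfB, hfF⟩ ⟨hB2, u', hu', heq⟩
    rw [show f * ((ξ * x)⁻¹ * u * y) = (f * ((ξ * x)⁻¹ * u)) * y by group] at heq
    have h' := mul_right_cancel heq
    have h2 : u' = (ζ * x) * (f * ((ξ * x)⁻¹ * u)) := by rw [h']; group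
    have h3 : u' * u⁻¹ = ζ * (x * f * x⁻¹) * ξ⁻¹ := by rw [h2]; group
    have h4 : x * f * x⁻¹ = f := by rw [← hcent f hfF x]; group
    have h6 : u' * u⁻¹ = ξ⁻¹ * ζ * f := by
      rw [h3, h4, hcent ζ hζ f, mul_assoc, hcent ζ hζ ξ⁻¹, hcent f hfF]
    refine ⟨u' * u⁻¹, ⟨?_, U.mul_mem hu' (U.inv_mem hu)⟩,
      f⁻¹, ⟨Bx.inv_mem hfB, Fh.inv_mem hfF⟩, ?_⟩
    · rw [h6]; exact Fh.mul_mem (Fh.mul_mem (Fh.inv_mem hξ) hζ) hfF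
    · rw [h6]; group
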